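/- Suppose a supersymmetric state φ with respect to δ on a norm-dense A₀ exists and the GNS representation (π, H, Ω) of φ is faithful. Then δ restricted to A₀ is closable in the norm of F: if A_n ∈ A₀, A_n → 0 and δ(A_n) → D in norm, then D = 0. -/

import Mathlib

open scoped ComplexOrder

/-- Suppose a supersymmetric state `φ` with respect to `δ` on a
norm-dense `A₀` exists, and the GNS representation `(π, H, Ω)` of `φ` is
faithful.  Then `δ` restricted to `A₀` is closable in the norm of `F`: if
`Aₙ ∈ A₀`, `Aₙ → 0` and `δ Aₙ → D` in norm, then `D = 0`. -/
theorem superderivation_closable_of_faithful_susy_state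
    {F : Type*} [NormedRing F] [StarRing F] [CStarRing F] [NormedAlgebra ℂ F]
    [StarModule ℂ F] [CompleteSpace F]
    {H : Type*} [NormedAddCommGroup H] [InnerProductSpace ℂ H] [CompleteSpace H]
    (γ : F ≃⋆ₐ[ℂ] F) (hγ : ∀ x, γ (γ x) = x)
    (A₀ : StarSubalgebra ℂ F) (hA₀ : ∀ a ∈ A₀, γ a ∈ A₀)
    (hA₀dense : Dense (A₀ : Set F))
    (δ : F →ₗ[ℂ] F)
    (hodd : ∀ a ∈ A₀, δ (γ a) = - γ (δ a))
    (hleib : ∀ a ∈ A₀, ∀ b ∈ A₀, δ (a * b) = δ a * b + γ a * δ b)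
    (φ : F →ₗ[ℂ] ℂ) (hφpos : ∀ x : F, 0 ≤ φ (star x * x)) (hφ1 : φ 1 = 1)
    (hsusy : ∀ a ∈ A₀, φ (δ a) = 0)
    (π : F →⋆ₐ[ℂ] (H →L[ℂ] H)) (Ω : H)
    (hGNS : ∀ x : F, φ x = inner ℂ Ω (π x Ω))
    (hcyclic : Dense (Set.range fun x : F => π x Ω))
    (hfaithful : Function.Injective π) :
    ∀ (u : ℕ → F) (D : F), (∀ n, u n ∈ A₀) →
      Filter.Tendsto u Filter.atTop (nhds 0) →
      Filter.Tendsto (fun n => δ (u n)) Filter.atTop (nhds D) →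
      D = 0 := by
  intro u D hu hu0 huD
  letI : CStarAlgebra F := { }
  -- continuity facts
  have hπcont : Continuous fun x : F => π x Ω := by
    have h1 : Continuous fun x : F => (π x : H →L[ℂ] H) := by
      refine AddMonoidHomClass.continuous_of_bound π 1 fun x => ?_
      simpa using NonUnitalStarAlgHom.norm_apply_le π x
    exact (ContinuousLinearMap.apply ℂ H Ω).continuous.comp h1
  have hφcont : Continuous fun x : F => φ x := by
    have : (fun x : F => φ x) = fun x : F => (inner ℂ Ω (π x Ω) : ℂ) := funext hGNS
    rw [this]
    exact Continuous.inner continuous_const hπcont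
  have hγcont : Continuous fun x : F => γ x := (StarAlgEquiv.isometry γ).continuous
  -- Step 1: φ (star b * (D * c)) = 0 for b c ∈ A₀
  have key : ∀ b ∈ A₀, ∀ c ∈ A₀, φ (star b * (D * c)) = 0 := by
    intro b hb c hc
    have hb' : γ (star b) ∈ A₀ := hA₀ _ (star_mem hb)
    -- identity for each n
    have hid : ∀ n, φ (star b * (δ (u n) * c)) =
        - φ (δ (γ (star b)) * (u n * c)) - φ (star b * (γ (u n) * δ c)) := by
      intro n
      have h0 : φ (δ (γ (star b) * (u n * c))) = 0 :=
        hsusy _ (mul_mem hb' (mul_mem (hu n) hc))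
      rw [hleib _ hb' _ (mul_mem (hu n) hc), hleib _ (hu n) _ hc, hγ] at h0
      have := h0
      simp only [map_add, mul_add] at this
      linear_combination this
    -- limits
    have hlim1 : Filter.Tendsto (fun n => φ (star b * (δ (u n) * c)))
        Filter.atTop (nhds (φ (star b * (D * c)))) := by
      have : Continuous fun x : F => φ (star b * (x * c)) :=
        hφcont.comp (continuous_const.mul (continuous_id.mul continuous_const))
      exact (this.tendsto D).comp huD
    have hlim2 : Filter.Tendsto (fun n => - φ (δ (γ (star b)) * (u n * c))
        - φ (star b * (γ (u n) * δ c))) Filter.atTop (nhds 0) := by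
      have h2 : Continuous fun x : F => - φ (δ (γ (star b)) * (x * c))
          - φ (star b * (γ x * δ c)) := by
        apply Continuous.sub
        · exact (hφcont.comp (continuous_const.mul (continuous_id.mul continuous_const))).neg
        · exact hφcont.comp (continuous_const.mul ((hγcont.mul continuous_const)))
      have := (h2.tendsto 0).comp hu0
      simpa [Function.comp_def] using this
    have := tendsto_nhds_unique hlim1 (Filter.Tendsto.congr (fun n => (hid n).symm) hlim2)
    exact this
  -- Step 2: extend to all b c by density
  have key2 : ∀ b c : F, φ (star b * (D * c)) = 0 := by
    have hdense : Dense ((A₀ : Set F) ×ˢ (A₀ : Set F)) := hA₀dense.prod hA₀dense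
    have hcont : Continuous fun p : F × F => φ (star p.1 * (D * p.2)) :=
      hφcont.comp ((continuous_star.comp continuous_fst).mul (continuous_const.mul continuous_snd))
    have := Continuous.ext_on hdense hcont continuous_const
      (fun p hp => key p.1 hp.1 p.2 hp.2)
    intro b c
    exact congrFun this (b, c)
  -- Step 3: inner products vanish
  have key3 : ∀ b c : F, (inner ℂ (π b Ω) (π D (π c Ω)) : ℂ) = 0 := by
    intro b c
    have := key2 b c
    rw [hGNS] at this
    rw [map_mul, map_mul, map_star] at this
    rw [ContinuousLinearMap.star_eq_adjoint] at this
    simpa [ContinuousLinearMap.adjoint_inner_right] using this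
  -- Step 4: π D vanishes on dense range
  have key4 : ∀ c : F, π D (π c Ω) = 0 := by
    intro c
    have : ∀ x : H, (inner ℂ x (π D (π c Ω)) : ℂ) = 0 := by
      have hcont : Continuous fun x : H => (inner ℂ x (π D (π c Ω)) : ℂ) :=
        Continuous.inner continuous_id continuous_const
      have := Continuous.ext_on hcyclic hcont continuous_const
        (by rintro x ⟨b, rfl⟩; exact key3 b c)
      exact fun x => congrFun this x
    have := this (π D (π c Ω))
    rwa [inner_self_eq_zero] at this
  -- Step 5: π D = 0
  have : π D = 0 := by
    ext x
    have heq := Continuous.ext_on hcyclic (π D).continuous (continuous_const (y := (0 : H)))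
      (by rintro _ ⟨c, rfl⟩; simpa using key4 c)
    simpa using congrFun heq x
  exact hfaithful (by simpa using this)
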